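/- Let D = 𝔽₂(t) be the field of rational functions over 𝔽₂ (RatFunc (ZMod 2), t = RatFunc.X), let A, B ∈ D, and let f, g : D → D be additive maps with f(1) = A, f(t) = B, satisfying f(x) + x^2 * g(x⁻¹) = 0 for every nonzero x ∈ D. Then for all polynomials P, Q, R, S over 𝔽₂ with R(t²) + S(t²)·t ≠ 0 in D, one has f( (P(t²) + Q(t²)·t) / (R(t²) + S(t²)·t) ) = ( (P(t)·R(t) + Q(t)·S(t)·t) / (R(t²) + S(t²)·t) )^2 · A + ( (P(t)·S(t) + Q(t)·R(t)) / (R(t²) + S(t²)·t) )^2 · B, where P(t), P(t²), etc. denote the images in D of P evaluated at t and at t² respectively. -/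

import Mathlib

open Polynomial

theorem aux_two : (2 : RatFunc (ZMod 2)) = 0 := by
  have := map_ofNat (algebraMap (ZMod 2) (RatFunc (ZMod 2))) 2
  rw [show ((OfNat.ofNat 2 : ZMod 2)) = 0 from by decide, map_zero] at this
  exact this.symm

theorem aux_comp_sq (F : (ZMod 2)[X]) : F.comp (X ^ 2) = F ^ 2 := by
  have h := Polynomial.map_frobenius_expand (p := 2) F
  have hfr : frobenius (ZMod 2) 2 = RingHom.id _ := by
    ext a; revert a; decide
  rw [hfr, Polynomial.map_id] at h
  rw [← expand_eq_comp_X_pow, h]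

section
variable (f g : RatFunc (ZMod 2) → RatFunc (ZMod 2))
  (hf : ∀ x y : RatFunc (ZMod 2), f (x + y) = f x + f y)
  (hg : ∀ x y : RatFunc (ZMod 2), g (x + y) = g x + g y)
  (hid : ∀ x : RatFunc (ZMod 2), x ≠ 0 → f x + x ^ 2 * g x⁻¹ = 0)

include hg hid in
theorem aux_star (a b : RatFunc (ZMod 2)) (ha : a ≠ 0) (hb : b ≠ 0) (hab : a + b ≠ 0) :
    f (a * b / (a + b)) = (a * b / (a + b)) ^ 2 * (f a / a ^ 2 + f b / b ^ 2) := by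
  have htwo := aux_two
  set c := a * b / (a + b) with hc
  have hc0 : c ≠ 0 := div_ne_zero (mul_ne_zero ha hb) hab
  have h1 := hid a ha
  have h2 := hid b hb
  have h3 := hid c hc0
  have h4 := hg a⁻¹ b⁻¹
  have hsum : a⁻¹ + b⁻¹ = c⁻¹ := by
    rw [hc]; field_simp; ring
  rw [hsum] at h4
  field_simp
  linear_combination (-(a^2*b^2)) * h3 + (a^2*b^2*c^2) * h4 + (-(b^2*c^2)) * h1 +
    (-(a^2*c^2)) * h2 + (f c * a^2*b^2 + a^4*b^4*(a+b)⁻¹^2*(g a⁻¹ + g b⁻¹)) * htwo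

include hf hg hid in
theorem aux_sqmul (x y : RatFunc (ZMod 2)) : f (x ^ 2 * y) = x ^ 2 * f y := by
  have htwo := aux_two
  have f0 : f 0 = 0 := by
    have h := hf 0 0
    rw [add_zero] at h
    exact (left_eq_add.mp h)
  rcases eq_or_ne x 0 with rfl | hx0
  · simp [f0]
  rcases eq_or_ne y 0 with rfl | hy0
  · simp [f0]
  rcases eq_or_ne x 1 with rfl | hx1
  · simp
  have hx1' : x + 1 ≠ 0 := by
    intro h
    exact hx1 (by linear_combination h - htwo)
  have hxy : x * y ≠ 0 := mul_ne_zero hx0 hy0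
  have hx2y : x ^ 2 * y ≠ 0 := mul_ne_zero (pow_ne_zero _ hx0) hy0
  have hs1 : x * y + x ^ 2 * y ≠ 0 := by
    intro h
    rcases mul_eq_zero.mp (show (x + 1) * (x * y) = 0 by linear_combination h) with h' | h'
    · exact hx1' h'
    · exact hxy h'
  have hs2 : x * y + y ≠ 0 := by
    intro h
    rcases mul_eq_zero.mp (show (x + 1) * y = 0 by linear_combination h) with h' | h'
    · exact hx1' h'
    · exact hy0 h'
  have E1 := aux_star f g hg hid (x * y) (x ^ 2 * y) hxy hx2y hs1
  have E2 := aux_star f g hg hid (x * y) y hxy hy0 hs2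
  rw [show x * y * (x ^ 2 * y) / (x * y + x ^ 2 * y) = x ^ 2 * y / (x + 1) from by
    rw [div_eq_div_iff hs1 hx1']; ring] at E1
  rw [show x * y * y / (x * y + y) = x * y / (x + 1) from by
    rw [div_eq_div_iff hs2 hx1']; ring] at E2
  have E3 : f (x ^ 2 * y / (x + 1)) = f (x * y) + f (x * y / (x + 1)) := by
    rw [show x ^ 2 * y / (x + 1) = x * y + x * y / (x + 1) from by
      rw [div_eq_iff hx1', add_mul, div_mul_cancel₀ _ hx1']
      linear_combination (-(x * y)) * htwo]
    exact hf _ _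
  have hE1 : f (x ^ 2 * y / (x + 1)) = (x ^ 2 * f (x * y) + f (x ^ 2 * y)) / (x + 1) ^ 2 := by
    rw [E1]; field_simp
  have hE2 : f (x * y / (x + 1)) = (f (x * y) + x ^ 2 * f y) / (x + 1) ^ 2 := by
    rw [E2]; field_simp
  rw [hE1, hE2] at E3
  field_simp at E3
  linear_combination E3 + ((x + 1) * f (x * y)) * htwo
end

theorem stmt13 (A B : RatFunc (ZMod 2))
    (f g : RatFunc (ZMod 2) → RatFunc (ZMod 2))
    (hf : ∀ x y : RatFunc (ZMod 2), f (x + y) = f x + f y)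
    (hg : ∀ x y : RatFunc (ZMod 2), g (x + y) = g x + g y)
    (hf1 : f 1 = A) (hft : f RatFunc.X = B)
    (hid : ∀ x : RatFunc (ZMod 2), x ≠ 0 → f x + x ^ 2 * g x⁻¹ = 0) :
    ∀ P Q R S : (ZMod 2)[X],
      let φ : (ZMod 2)[X] → RatFunc (ZMod 2) :=
        fun F => algebraMap ((ZMod 2)[X]) (RatFunc (ZMod 2)) F
      φ (R.comp (X ^ 2)) + φ (S.comp (X ^ 2)) * RatFunc.X ≠ 0 →
      f ((φ (P.comp (X ^ 2)) + φ (Q.comp (X ^ 2)) * RatFunc.X) /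
          (φ (R.comp (X ^ 2)) + φ (S.comp (X ^ 2)) * RatFunc.X)) =
        ((φ (P * R) + φ (Q * S) * RatFunc.X) /
            (φ (R.comp (X ^ 2)) + φ (S.comp (X ^ 2)) * RatFunc.X)) ^ 2 * A +
        ((φ (P * S + Q * R)) /
            (φ (R.comp (X ^ 2)) + φ (S.comp (X ^ 2)) * RatFunc.X)) ^ 2 * B := by
  have key := aux_sqmul f g hf hg hid
  intro P Q R S φ hD
  have htwo := aux_two
  have hφ : ∀ F : (ZMod 2)[X], φ (F.comp (X ^ 2)) = φ F ^ 2 := by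
    intro F
    show algebraMap ((ZMod 2)[X]) (RatFunc (ZMod 2)) _ = _
    rw [aux_comp_sq, map_pow]
  have hmul : ∀ F G : (ZMod 2)[X], φ (F * G) = φ F * φ G := fun F G => map_mul _ F G
  have hadd : ∀ F G : (ZMod 2)[X], φ (F + G) = φ F + φ G := fun F G => map_add _ F G
  simp only [hφ, hmul, hadd] at hD ⊢
  set t : RatFunc (ZMod 2) := RatFunc.X with ht
  set p := φ P with hp
  set q := φ Q with hq
  set r := φ R with hr
  set s := φ S with hs
  set D := r ^ 2 + s ^ 2 * t with hDdef
  have harg : (p ^ 2 + q ^ 2 * t) / D =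
      ((p * r + q * s * t) / D) ^ 2 * 1 + ((p * s + q * r) / D) ^ 2 * t := by
    field_simp
    linear_combination (2 * p * q * r * s * t * D ^ 2
      - 2 * p * q * r * s * t * (r ^ 2 + (r ^ 2 + t * s ^ 2) ^ 2)
      - 2 * p * q * t ^ 2 * r * s ^ 3
      - 2 * p * q * t * r * s + 2 * p * q * t * r ^ 3 * s + 2 * p * q * t ^ 2 * r * s ^ 3) * htwo
  rw [harg, hf, key, key, hf1, hft]
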